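/- Let S be the RNA sequence corresponding to a labelled dotted rooted tree. Then any two adjacent positions of S read dots of tree vertices whose heights either are equal or differ by exactly one. -/

import Mathlib

/- A dotted (ordered, plane) rooted tree: `leaf1` is a one-dot leaf, `node f` is a
two-dot vertex with ordered forest of children `f`.  A dotted *rooted* tree in the
sense of the paper is a tree of the form `DTree.node f` (the root carries two dots). -/
mutual
inductive DTree : Type
  | leaf1 : DTree
  | node  : DForest → DTree
inductive DForest : Type
  | nil  : DForest
  | cons : DTree → DForest → DForest
end

/- Total number of dots. -/
mutual
def DTree.size : DTree → ℕ
  | DTree.leaf1 => 1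
  | DTree.node f => 2 + DForest.size f
def DForest.size : DForest → ℕ
  | DForest.nil => 0
  | DForest.cons t f => DTree.size t + DForest.size f
end

/- Arcs of the corresponding secondary structure, positions assigned in the order of
the traversal that visits each two-dot vertex once before and once after its children
(left to right) and each one-dot leaf once; `off` is the next position to assign. -/
mutual
def DTree.arcs : DTree → ℕ → List (ℕ × ℕ)
  | DTree.leaf1, _ => []
  | DTree.node f, off => (off, off + DForest.size f + 1) :: DForest.arcs f (off + 1)
def DForest.arcs : DForest → ℕ → List (ℕ × ℕ)
  | DForest.nil, _ => []
  | DForest.cons t f, off => DTree.arcs t off ++ DForest.arcs f (off + DTree.size t)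
end

/-- The secondary structure (on `{1,…,size}`) corresponding to a dotted tree. -/
def DTree.secStruct (t : DTree) : Finset (ℕ × ℕ) := (DTree.arcs t 1).toFinset

/- Heights of the tree vertices whose dots are read at successive positions of the
traversal, the root subtree starting at height `h`. -/
mutual
def DTree.heights : DTree → ℕ → List ℕ
  | DTree.leaf1, h => [h]
  | DTree.node f, h => h :: (DForest.heights f (h + 1) ++ [h])
def DForest.heights : DForest → ℕ → List ℕ
  | DForest.nil, _ => []
  | DForest.cons t f, h => DTree.heights t h ++ DForest.heights f h
end

def HRel (a b : ℕ) : Prop := a = b ∨ a = b + 1 ∨ b = a + 1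

mutual
theorem treeH : ∀ (t : DTree) (h : ℕ),
    (DTree.heights t h).Chain' HRel ∧ (DTree.heights t h).head? = some h ∧
      (DTree.heights t h).getLast? = some h
  | DTree.leaf1, h => by
      simp [DTree.heights, List.Chain', List.isChain_singleton]
  | DTree.node f, h => by
      obtain ⟨hc, hh, hl⟩ := forestH f (h + 1)
      refine ⟨?_, ?_, ?_⟩
      · rw [DTree.heights, List.Chain', List.isChain_cons]
        constructor
        · intro y hy
          rcases hf : DForest.heights f (h + 1) with _ | ⟨a, l⟩
          · simp [hf] at hy; subst hy; exact Or.inl rfl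
          · rw [hf] at hy
            simp at hy
            have := hh a (by simp [hf])
            subst hy
            exact Or.inr (Or.inr (this ▸ rfl))
        · refine List.IsChain.append hc (List.isChain_singleton _) ?_
          intro x hx y hy
          simp at hy; subst hy
          have := hl x hx
          exact Or.inr (Or.inl this)
      · simp [DTree.heights]
      · rw [DTree.heights]
        rw [List.getLast?_cons, List.getLast?_append]
        simp
theorem forestH : ∀ (f : DForest) (h : ℕ),
    (DForest.heights f h).Chain' HRel ∧ (∀ x ∈ (DForest.heights f h).head?, x = h) ∧
      (∀ x ∈ (DForest.heights f h).getLast?, x = h)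
  | DForest.nil, h => by simp [DForest.heights, List.Chain', List.IsChain.nil]
  | DForest.cons t f, h => by
      obtain ⟨tc, th, tl⟩ := treeH t h
      obtain ⟨fc, fh, fl⟩ := forestH f h
      refine ⟨?_, ?_, ?_⟩
      · rw [DForest.heights]
        refine List.IsChain.append tc fc ?_
        intro x hx y hy
        rw [tl] at hx; simp at hx; subst hx
        have := fh y hy
        subst this
        exact Or.inl rfl
      · rw [DForest.heights]
        intro x hx
        rcases ht : DTree.heights t h with _ | ⟨a, l⟩
        · rw [ht] at th; simp at th
        · rw [ht] at hx th
          simp at hx th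
          subst hx; omega
      · rw [DForest.heights]
        intro x hx
        rcases hf : DForest.heights f h with _ | ⟨a, l⟩
        · rw [hf, List.append_nil] at hx
          rw [tl] at hx; simpa using hx.symm
        · rw [hf] at hx
          rw [List.getLast?_append] at hx
          rcases hg : (a :: l).getLast? with _ | b
          · simp at hg
          · rw [hg] at hx
            simp at hx
            subst hx
            exact fl b (by rw [hf, hg]; rfl)
end

/-- In the sequence corresponding to a (labelled) dotted rooted tree,
any two adjacent positions read dots of vertices whose heights are equal or differ by
exactly one. -/
theorem adjacent_heights (f : DForest) (i : ℕ)
    (hi : i + 1 < (DTree.heights (DTree.node f) 0).length) :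
    (DTree.heights (DTree.node f) 0).getD i 0 =
        (DTree.heights (DTree.node f) 0).getD (i + 1) 0 ∨
    (DTree.heights (DTree.node f) 0).getD i 0 =
        (DTree.heights (DTree.node f) 0).getD (i + 1) 0 + 1 ∨
    (DTree.heights (DTree.node f) 0).getD (i + 1) 0 =
        (DTree.heights (DTree.node f) 0).getD i 0 + 1 := by
  have hc := (treeH (DTree.node f) 0).1
  rw [List.Chain', List.isChain_iff_getElem] at hc
  have := hc i (by omega)
  have h1 : i < (DTree.heights (DTree.node f) 0).length := by omega
  simp only [List.getD_eq_getElem?_getD, List.getElem?_eq_getElem h1, List.getElem?_eq_getElem hi, Option.getD_some]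
  exact this
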